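/- For symmetric positive definite matrices C₁ ⪯ C₂ (Loewner order) and any n×d matrix F and symmetric positive definite V, the corresponding Kalman posterior covariances satisfy C₁ − C₁F'(FC₁F' + V)⁻¹FC₁ ⪯ C₂ − C₂F'(FC₂F' + V)⁻¹FC₂; i.e., the Kalman measurement update is monotone in the prior covariance. -/

import Mathlib

open Matrix

private lemma posdef_isUnit {k : ℕ} {A : Matrix (Fin k) (Fin k) ℝ} (hA : A.PosDef) :
    IsUnit A := by
  rw [Matrix.isUnit_iff_isUnit_det]
  exact isUnit_iff_ne_zero.mpr (ne_of_gt hA.det_pos)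

open scoped MatrixOrder in
/-- Inverse is antitone on positive definite matrices. -/
private lemma inv_sub_inv_psd {k : ℕ} {A B : Matrix (Fin k) (Fin k) ℝ}
    (hA : A.PosDef) (hB : B.PosDef) (hAB : (B - A).PosSemidef) :
    (A⁻¹ - B⁻¹).PosSemidef := by
  set S := CFC.sqrt (B - A) with hSdef
  have hS : S.PosSemidef := (CFC.sqrt_nonneg (B - A)).posSemidef
  have hSS : S * S = B - A := CFC.sqrt_mul_sqrt_self (B - A) hAB.nonneg
  have hSH : Sᴴ = S := hS.isHermitian
  have hAinv : A⁻¹.PosDef := hA.inv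
  have hmid : ((1 : Matrix (Fin k) (Fin k) ℝ) + S * A⁻¹ * S).PosDef := by
    have := hAinv.posSemidef.mul_mul_conjTranspose_same S
    rw [hSH] at this
    exact Matrix.PosDef.add_posSemidef Matrix.PosDef.one this
  have hB' : B = A + S * 1 * S := by
    rw [Matrix.mul_one, hSS]; abel
  have hwood : B⁻¹ = A⁻¹ - A⁻¹ * S * (1⁻¹ + S * A⁻¹ * S)⁻¹ * S * A⁻¹ := by
    rw [hB']
    exact Matrix.add_mul_mul_inv_eq_sub A S 1 S (posdef_isUnit hA) isUnit_one
      (by rw [inv_one]; exact posdef_isUnit hmid)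
  have key : A⁻¹ - B⁻¹ = (A⁻¹ * S) * (1 + S * A⁻¹ * S)⁻¹ * (A⁻¹ * S)ᴴ := by
    rw [hwood, Matrix.conjTranspose_mul, hSH, hAinv.isHermitian]
    rw [inv_one, sub_sub_cancel, mul_assoc]
  rw [key]
  exact hmid.inv.posSemidef.mul_mul_conjTranspose_same (A⁻¹ * S)

/-- Kalman update rewritten via the Woodbury identity. -/
private lemma kalman_update_eq {d n : ℕ} (C : Matrix (Fin d) (Fin d) ℝ)
    (F : Matrix (Fin n) (Fin d) ℝ) (V : Matrix (Fin n) (Fin n) ℝ)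
    (hC : C.PosDef) (hV : V.PosDef) :
    C - C * Fᵀ * (F * C * Fᵀ + V)⁻¹ * F * C = (C⁻¹ + Fᵀ * V⁻¹ * F)⁻¹ := by
  have hCu : IsUnit C.det := isUnit_iff_ne_zero.mpr (ne_of_gt hC.det_pos)
  have hVu : IsUnit V.det := isUnit_iff_ne_zero.mpr (ne_of_gt hV.det_pos)
  have hFCF : (F * C * Fᵀ + V).PosDef := by
    have := hC.posSemidef.mul_mul_conjTranspose_same F
    rw [Matrix.conjTranspose_eq_transpose_of_trivial] at this
    exact Matrix.PosDef.posSemidef_add this hV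
  have h1 : (C⁻¹)⁻¹ = C := Matrix.nonsing_inv_nonsing_inv C hCu
  have h2 : (V⁻¹)⁻¹ = V := Matrix.nonsing_inv_nonsing_inv V hVu
  have := Matrix.add_mul_mul_inv_eq_sub C⁻¹ Fᵀ V⁻¹ F
    (posdef_isUnit hC.inv) (posdef_isUnit hV.inv)
    (by rw [h1, h2]; rw [show V + F * C * Fᵀ = F * C * Fᵀ + V from add_comm _ _]
        exact posdef_isUnit hFCF)
  rw [h1, h2, show V + F * C * Fᵀ = F * C * Fᵀ + V from add_comm _ _] at this
  exact this.symm

/-- The Kalman measurement update is monotone in the prior covariance: for symmetric positive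
definite `C₁ ⪯ C₂` and symmetric positive definite `V`,
`C₁ − C₁Fᵀ(FC₁Fᵀ + V)⁻¹FC₁ ⪯ C₂ − C₂Fᵀ(FC₂Fᵀ + V)⁻¹FC₂`. -/
theorem kalman_update_monotone {d n : ℕ}
    (C1 C2 : Matrix (Fin d) (Fin d) ℝ) (F : Matrix (Fin n) (Fin d) ℝ)
    (V : Matrix (Fin n) (Fin n) ℝ)
    (hC1 : C1.PosDef) (hC2 : C2.PosDef) (hV : V.PosDef)
    (h12 : (C2 - C1).PosSemidef) :
    ((C2 - C2 * Fᵀ * (F * C2 * Fᵀ + V)⁻¹ * F * C2) -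
      (C1 - C1 * Fᵀ * (F * C1 * Fᵀ + V)⁻¹ * F * C1)).PosSemidef := by
  have hK : (Fᵀ * V⁻¹ * F).PosSemidef := by
    have := hV.inv.posSemidef.mul_mul_conjTranspose_same Fᵀ
    rwa [Matrix.conjTranspose_eq_transpose_of_trivial, Matrix.transpose_transpose] at this
  have hA1 : (C1⁻¹ + Fᵀ * V⁻¹ * F).PosDef := hC1.inv.add_posSemidef hK
  have hA2 : (C2⁻¹ + Fᵀ * V⁻¹ * F).PosDef := hC2.inv.add_posSemidef hK
  have hdiff : ((C1⁻¹ + Fᵀ * V⁻¹ * F) - (C2⁻¹ + Fᵀ * V⁻¹ * F)).PosSemidef := by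
    have := inv_sub_inv_psd hC1 hC2 h12
    rw [show (C1⁻¹ + Fᵀ * V⁻¹ * F) - (C2⁻¹ + Fᵀ * V⁻¹ * F) = C1⁻¹ - C2⁻¹ by abel]
    exact this
  have := inv_sub_inv_psd hA2 hA1 hdiff
  rwa [kalman_update_eq C1 F V hC1 hV, kalman_update_eq C2 F V hC2 hV]
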